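/- The primary number of G_{p,q} equals (1/2)(q−1)(r+1), where r = (p−1)/q; in particular prim(G_{p,q}) ≥ 2. -/

import Mathlib

open Multiplicative

namespace Mizerka

/-- The standing hypotheses: `p` and `q` are odd primes with `q ∣ p - 1`, and `i` is a
natural number with `i ≡ 1 (mod q)` whose multiplicative order modulo `p` equals `q`. -/
structure Hyp (p q i : ℕ) : Prop where
  hp : Nat.Prime p
  hq : Nat.Prime q
  hoddp : Odd p
  hoddq : Odd q
  hdvd : q ∣ p - 1
  hmod : i ≡ 1 [MOD q]
  hord : orderOf (i : ZMod p) = q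

namespace Hyp

variable {p q i : ℕ}

theorem coprime_q (h : Hyp p q i) : Nat.Coprime i q := by
  have h1 : i % q = 1 % q := h.hmod
  unfold Nat.Coprime
  rw [Nat.gcd_comm, Nat.gcd_rec, h1, ← Nat.gcd_rec, Nat.gcd_one_right]

theorem coprime_p (h : Hyp p q i) : Nat.Coprime i p := by
  haveI : NeZero p := ⟨h.hp.ne_zero⟩
  have hq1 : q - 1 + 1 = q := Nat.succ_pred_eq_of_pos h.hq.pos
  have hmul : (i : ZMod p) * (i : ZMod p) ^ (q - 1) = 1 := by
    rw [← pow_succ', hq1, ← h.hord, pow_orderOf_eq_one]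
  exact (ZMod.isUnit_iff_coprime i p).mp (IsUnit.of_mul_eq_one _ hmul)

theorem coprime (h : Hyp p q i) : Nat.Coprime i (p * q) :=
  Nat.Coprime.mul_right h.coprime_p h.coprime_q

theorem pow_q_modeq (h : Hyp p q i) : i ^ q ≡ 1 [MOD p * q] := by
  have hpq : p ≠ q := by
    have h1 : 0 < p - 1 := by have := h.hp.two_le; omega
    have := Nat.le_of_dvd h1 h.hdvd
    omega
  have hc : Nat.Coprime p q := (Nat.coprime_primes h.hp h.hq).mpr hpq
  rw [← Nat.modEq_and_modEq_iff_modEq_mul hc]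
  constructor
  · haveI : NeZero p := ⟨h.hp.ne_zero⟩
    have hcast : ((i ^ q : ℕ) : ZMod p) = ((1 : ℕ) : ZMod p) := by
      push_cast
      rw [← h.hord, pow_orderOf_eq_one]
    exact (ZMod.natCast_eq_natCast_iff _ _ _).mp hcast
  · calc i ^ q ≡ 1 ^ q [MOD q] := h.hmod.pow q
      _ = 1 := one_pow q

/-- The unit of `ZMod (p*q)` determined by `i`. -/
def unit (h : Hyp p q i) : (ZMod (p * q))ˣ := ZMod.unitOfCoprime i h.coprime

/-- The unit of `ZMod p` determined by `i`. -/
def unitP (h : Hyp p q i) : (ZMod p)ˣ := ZMod.unitOfCoprime i h.coprime_p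

theorem unit_pow (h : Hyp p q i) : h.unit ^ q = 1 := by
  apply Units.ext
  have h2 : ((i ^ q : ℕ) : ZMod (p * q)) = ((1 : ℕ) : ZMod (p * q)) :=
    (ZMod.natCast_eq_natCast_iff _ _ _).mpr h.pow_q_modeq
  push_cast at h2
  simpa [Hyp.unit] using h2

theorem unitP_pow (h : Hyp p q i) : h.unitP ^ q = 1 := by
  apply Units.ext
  have h2 : (i : ZMod p) ^ q = 1 := by rw [← h.hord]; exact pow_orderOf_eq_one _
  simpa [Hyp.unitP] using h2

end Hyp

/-- Multiplication by a unit, as an automorphism of the (multiplicatively written)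
cyclic group `ZMod n`. -/
def zmodMulAut (n : ℕ) : (ZMod n)ˣ →* MulAut (Multiplicative (ZMod n)) where
  toFun u :=
    { toFun := fun x => ofAdd ((u : ZMod n) * x.toAdd)
      invFun := fun x => ofAdd (((u⁻¹ : (ZMod n)ˣ) : ZMod n) * x.toAdd)
      left_inv := fun x => by simp
      right_inv := fun x => by simp
      map_mul' := fun x y => by simp [mul_add, ← ofAdd_add] }
  map_one' := by ext x; simp
  map_mul' u v := by ext x; simp [mul_assoc]

/-- The function underlying the automorphism of the dihedral group induced by
multiplication by a unit on the rotation part. -/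
def dihedralAutFun (n : ℕ) (u : (ZMod n)ˣ) : DihedralGroup n → DihedralGroup n
  | .r j => .r ((u : ZMod n) * j)
  | .sr j => .sr ((u : ZMod n) * j)

/-- Multiplication of indices by a unit, as an automorphism of the dihedral group:
`a ↦ a^u`, `b ↦ b`. -/
def dihedralAut (n : ℕ) : (ZMod n)ˣ →* MulAut (DihedralGroup n) where
  toFun u :=
    { toFun := dihedralAutFun n u
      invFun := dihedralAutFun n u⁻¹
      left_inv := fun x => by cases x <;> simp [dihedralAutFun]
      right_inv := fun x => by cases x <;> simp [dihedralAutFun]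
      map_mul' := fun x y => by cases x <;> cases y <;> simp [dihedralAutFun, mul_add, mul_sub] }
  map_one' := by ext x; cases x <;> simp [dihedralAutFun]
  map_mul' u v := by ext x; cases x <;> simp [dihedralAutFun, mul_assoc]

/-- The homomorphism `ZMod q →* G` (written multiplicatively) sending `1` to a fixed
element `g` with `g ^ q = 1`. -/
def zmodPow {G : Type*} [Group G] (q : ℕ) [NeZero q] (g : G) (hg : g ^ q = 1) :
    Multiplicative (ZMod q) →* G where
  toFun x := g ^ (toAdd x).val
  map_one' := by
    show g ^ (toAdd (1 : Multiplicative (ZMod q))).val = 1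
    rw [toAdd_one, ZMod.val_zero, pow_zero]
  map_mul' x y := by
    have key : ∀ m : ℕ, g ^ (m % q) = g ^ m := fun m => by
      conv_rhs => rw [← Nat.div_add_mod m q]
      rw [pow_add, pow_mul, hg, one_pow, one_mul]
    show g ^ (toAdd (x * y)).val = g ^ (toAdd x).val * g ^ (toAdd y).val
    rw [toAdd_mul, ZMod.val_add, key, pow_add]

namespace Hyp

variable {p q i : ℕ}

/-- The action of `C_q` on `C_{pq}` sending the generator to multiplication by `i`. -/
def phiN (h : Hyp p q i) : Multiplicative (ZMod q) →* MulAut (Multiplicative (ZMod (p * q))) :=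
  haveI : NeZero q := ⟨h.hq.ne_zero⟩
  zmodPow q (zmodMulAut (p * q) h.unit) (by rw [← map_pow, h.unit_pow, map_one])

/-- The action of `C_q` on `D_{2pq}` sending the generator to `τ` (`τ(a) = a^i`, `τ(b) = b`). -/
def phiG (h : Hyp p q i) : Multiplicative (ZMod q) →* MulAut (DihedralGroup (p * q)) :=
  haveI : NeZero q := ⟨h.hq.ne_zero⟩
  zmodPow q (dihedralAut (p * q) h.unit) (by rw [← map_pow, h.unit_pow, map_one])

/-- The action of `C_q` on `C_p` sending the generator to multiplication by `i`. -/
def phiF (h : Hyp p q i) : Multiplicative (ZMod q) →* MulAut (Multiplicative (ZMod p)) :=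
  haveI : NeZero q := ⟨h.hq.ne_zero⟩
  zmodPow q (zmodMulAut p h.unitP) (by rw [← map_pow, h.unitP_pow, map_one])

end Hyp

/-- The group `N_{pq²} = ⟨a, c ∣ a^{pq} = c^q = 1, c a c⁻¹ = a^i⟩ = C_{pq} ⋊ C_q`. -/
abbrev Npq2 {p q i : ℕ} (h : Hyp p q i) : Type :=
  Multiplicative (ZMod (p * q)) ⋊[h.phiN] Multiplicative (ZMod q)

/-- The group `G_{p,q} = D_{2pq} ⋊_φ C_q`. -/
abbrev Gpq {p q i : ℕ} (h : Hyp p q i) : Type :=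
  DihedralGroup (p * q) ⋊[h.phiG] Multiplicative (ZMod q)

/-- The Frobenius group `F_{p,q} = C_p ⋊ C_q` (the nonabelian group of order `pq`). -/
abbrev Fpq {p q i : ℕ} (h : Hyp p q i) : Type :=
  Multiplicative (ZMod p) ⋊[h.phiF] Multiplicative (ZMod q)

variable {p q i : ℕ}

/-- The generator `a` of `N_{pq²}`. -/
def aN (h : Hyp p q i) : Npq2 h := SemidirectProduct.inl (ofAdd 1)

/-- The generator `c` of `N_{pq²}`. -/
def cN (h : Hyp p q i) : Npq2 h := SemidirectProduct.inr (ofAdd 1)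

/-- The generator `a` of `G_{p,q}`. -/
def aG (h : Hyp p q i) : Gpq h := SemidirectProduct.inl (DihedralGroup.r 1)

/-- The generator `b` of `G_{p,q}`. -/
def bG (h : Hyp p q i) : Gpq h := SemidirectProduct.inl (DihedralGroup.sr 0)

/-- The generator `c` of `G_{p,q}`. -/
def cG (h : Hyp p q i) : Gpq h := SemidirectProduct.inr (ofAdd 1)

/-- The real conjugacy class `(g)^± = (g) ∪ (g⁻¹)`. -/
def realClass {G : Type*} [Group G] (g : G) : Set G := {x | IsConj g x ∨ IsConj g⁻¹ x}

/-- `N` is a normal subgroup whose quotient is an `ℓ`-group (the quotient has `ℓ`-power order,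
i.e. `N` has `ℓ`-power index). -/
def OQuot {G : Type*} [Group G] (ℓ : ℕ) (N : Subgroup G) : Prop :=
  N.Normal ∧ ∃ k : ℕ, N.index = ℓ ^ k

/-- `H` is a large subgroup of `G`: it contains `O^ℓ(G)`, the smallest normal subgroup
with `ℓ`-group quotient, for some prime `ℓ`. -/
def IsLarge {G : Type*} [Group G] (H : Subgroup G) : Prop :=
  ∃ ℓ : ℕ, Nat.Prime ℓ ∧
    ∃ N : Subgroup G, OQuot ℓ N ∧ (∀ M : Subgroup G, OQuot ℓ M → N ≤ M) ∧ N ≤ H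

section Reps

variable {k : Type*} [CommSemiring k] {G : Type*} [Group G]

/-- The subspace `V^H` of `H`-fixed vectors of a representation. -/
def fixedPts {V : Type*} [AddCommMonoid V] [Module k V]
    (ρ : Representation k G V) (H : Subgroup G) : Submodule k V where
  carrier := {v | ∀ g ∈ H, ρ g v = v}
  add_mem' := by
    intro a b ha hb g hg
    rw [map_add, ha g hg, hb g hg]
  zero_mem' := by
    intro g hg
    rw [map_zero]
  smul_mem' := by
    intro c v hv g hg
    rw [map_smul, hv g hg]

end Reps

/-- The weak gap condition for a real representation: `dim V^P ≥ 2 dim V^H` for all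
`P < H ≤ G` with `P` of prime power order. -/
def WeakGap {G : Type*} [Group G] {V : Type*} [AddCommGroup V] [Module ℝ V]
    (ρ : Representation ℝ G V) : Prop :=
  ∀ P H : Subgroup G, P < H → (∃ ℓ k : ℕ, Nat.Prime ℓ ∧ Nat.card P = ℓ ^ k) →
    2 * Module.finrank ℝ (fixedPts ρ H) ≤ Module.finrank ℝ (fixedPts ρ P)

/-- Isomorphism of real representations: an equivariant linear equivalence. -/
def RepIso {G : Type*} [Group G] {U V : Type*} [AddCommGroup U] [Module ℝ U]
    [AddCommGroup V] [Module ℝ V]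
    (ρU : Representation ℝ G U) (ρV : Representation ℝ G V) : Prop :=
  ∃ e : U ≃ₗ[ℝ] V, ∀ (g : G) (u : U), e (ρU g u) = ρV g (e u)

/-- Two real representations are `𝒫`-matched if their restrictions to every subgroup of
prime power order are isomorphic. -/
def PMatched {G : Type*} [Group G] {U V : Type*} [AddCommGroup U] [Module ℝ U]
    [AddCommGroup V] [Module ℝ V]
    (ρU : Representation ℝ G U) (ρV : Representation ℝ G V) : Prop :=
  ∀ P : Subgroup G, (∃ ℓ k : ℕ, Nat.Prime ℓ ∧ Nat.card P = ℓ ^ k) →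
    RepIso (ρU.comp P.subtype) (ρV.comp P.subtype)

/-- A bundled finite-dimensional-free real representation of `G`. -/
structure RealRep (G : Type*) [Group G] where
  carrier : Type
  [acg : AddCommGroup carrier]
  [mod : Module ℝ carrier]
  rho : Representation ℝ G carrier

attribute [instance] RealRep.acg RealRep.mod

theorem dihedralAut_pow_r (n : ℕ) (u : (ZMod n)ˣ) (k : ℕ) (m : ZMod n) :
    ((dihedralAut n u) ^ k) (DihedralGroup.r m)
      = DihedralGroup.r (((u ^ k : (ZMod n)ˣ) : ZMod n) * m) := by
  induction k generalizing m with
  | zero => simp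
  | succ k ih =>
    rw [pow_succ, MulAut.mul_apply]
    have h1 : (dihedralAut n u) (DihedralGroup.r m) = DihedralGroup.r ((u : ZMod n) * m) := rfl
    rw [h1, ih, pow_succ, Units.val_mul, mul_assoc]

theorem Hyp.phiG_r (h : Hyp p q i) (z : Multiplicative (ZMod q)) (m : ZMod (p * q)) :
    h.phiG z (DihedralGroup.r m)
      = DihedralGroup.r (((h.unit ^ (toAdd z).val : (ZMod (p * q))ˣ) : ZMod (p * q)) * m) := by
  have h1 : h.phiG z = (dihedralAut (p * q) h.unit) ^ (toAdd z).val := rfl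
  rw [h1, dihedralAut_pow_r]

theorem r_inv (n : ℕ) (m : ZMod n) : (DihedralGroup.r m)⁻¹ = DihedralGroup.r (-m) := rfl

/-- The subgroup `N_{pq²} = {(aˡ, cᵐ)}` of `G_{p,q}`. -/
def NSub (h : Hyp p q i) : Subgroup (Gpq h) where
  carrier := {x | ∃ l : ZMod (p * q), x.left = DihedralGroup.r l}
  one_mem' := ⟨0, rfl⟩
  mul_mem' := by
    rintro x y ⟨lx, hx⟩ ⟨ly, hy⟩
    refine ⟨lx + (h.unit ^ (toAdd x.right).val : (ZMod (p * q))ˣ) * ly, ?_⟩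
    rw [SemidirectProduct.mul_left, hx, hy, h.phiG_r, DihedralGroup.r_mul_r]
  inv_mem' := by
    rintro x ⟨lx, hx⟩
    refine ⟨-((h.unit ^ (toAdd x.right⁻¹).val : (ZMod (p * q))ˣ) * lx), ?_⟩
    rw [SemidirectProduct.inv_left, hx, r_inv, h.phiG_r]
    congr 1
    ring

/-- The subgroup `N_{2pq} = {(bᵉaˡ, 1)} ≅ D_{2pq}` of `G_{p,q}`. -/
def N2pqSub (h : Hyp p q i) : Subgroup (Gpq h) :=
  MonoidHom.ker SemidirectProduct.rightHom

/-- The subgroup `N¹_{pq} = {(aˡ, 1)}` of `G_{p,q}`. -/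
def NpqOneSub (h : Hyp p q i) : Subgroup (Gpq h) where
  carrier := {x | x.right = 1 ∧ ∃ l : ZMod (p * q), x.left = DihedralGroup.r l}
  one_mem' := ⟨rfl, 0, rfl⟩
  mul_mem' := by
    rintro x y ⟨hx1, lx, hx⟩ ⟨hy1, ly, hy⟩
    refine ⟨by rw [SemidirectProduct.mul_right, hx1, hy1, mul_one],
      lx + (h.unit ^ (toAdd x.right).val : (ZMod (p * q))ˣ) * ly, ?_⟩
    rw [SemidirectProduct.mul_left, hx, hy, h.phiG_r, DihedralGroup.r_mul_r]
  inv_mem' := by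
    rintro x ⟨hx1, lx, hx⟩
    refine ⟨by rw [SemidirectProduct.inv_right, hx1, inv_one],
      -((h.unit ^ (toAdd x.right⁻¹).val : (ZMod (p * q))ˣ) * lx), ?_⟩
    rw [SemidirectProduct.inv_left, hx, r_inv, h.phiG_r]
    congr 1
    ring

/-- The subgroup `N²_{pq} = {(a^{qs}, cᵐ)}` of `G_{p,q}`. -/
def NpqTwoSub (h : Hyp p q i) : Subgroup (Gpq h) where
  carrier := {x | ∃ s : ZMod (p * q), x.left = DihedralGroup.r ((q : ZMod (p * q)) * s)}
  one_mem' := ⟨0, by simp [-DihedralGroup.r_zero, DihedralGroup.one_def]⟩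
  mul_mem' := by
    rintro x y ⟨sx, hx⟩ ⟨sy, hy⟩
    refine ⟨sx + (h.unit ^ (toAdd x.right).val : (ZMod (p * q))ˣ) * sy, ?_⟩
    rw [SemidirectProduct.mul_left, hx, hy, h.phiG_r, DihedralGroup.r_mul_r]
    congr 1
    ring
  inv_mem' := by
    rintro x ⟨sx, hx⟩
    refine ⟨-((h.unit ^ (toAdd x.right⁻¹).val : (ZMod (p * q))ˣ) * sx), ?_⟩
    rw [SemidirectProduct.inv_left, hx, r_inv, h.phiG_r]
    congr 1
    ring

/-- The subgroup `N_p = {(a^{qs}, 1)}` of `G_{p,q}`. -/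
def NpSub (h : Hyp p q i) : Subgroup (Gpq h) where
  carrier := {x | x.right = 1 ∧ ∃ s : ZMod (p * q), x.left = DihedralGroup.r ((q : ZMod (p * q)) * s)}
  one_mem' := ⟨rfl, 0, by simp [-DihedralGroup.r_zero, DihedralGroup.one_def]⟩
  mul_mem' := by
    rintro x y ⟨hx1, sx, hx⟩ ⟨hy1, sy, hy⟩
    refine ⟨by rw [SemidirectProduct.mul_right, hx1, hy1, mul_one],
      sx + (h.unit ^ (toAdd x.right).val : (ZMod (p * q))ˣ) * sy, ?_⟩
    rw [SemidirectProduct.mul_left, hx, hy, h.phiG_r, DihedralGroup.r_mul_r]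
    congr 1
    ring
  inv_mem' := by
    rintro x ⟨hx1, sx, hx⟩
    refine ⟨by rw [SemidirectProduct.inv_right, hx1, inv_one],
      -((h.unit ^ (toAdd x.right⁻¹).val : (ZMod (p * q))ˣ) * sx), ?_⟩
    rw [SemidirectProduct.inv_left, hx, r_inv, h.phiG_r]
    congr 1
    ring

/-- The subgroup `N_q = {(a^{ps}, 1)}` of `G_{p,q}`. -/
def NqSub (h : Hyp p q i) : Subgroup (Gpq h) where
  carrier := {x | x.right = 1 ∧ ∃ s : ZMod (p * q), x.left = DihedralGroup.r ((p : ZMod (p * q)) * s)}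
  one_mem' := ⟨rfl, 0, by simp [-DihedralGroup.r_zero, DihedralGroup.one_def]⟩
  mul_mem' := by
    rintro x y ⟨hx1, sx, hx⟩ ⟨hy1, sy, hy⟩
    refine ⟨by rw [SemidirectProduct.mul_right, hx1, hy1, mul_one],
      sx + (h.unit ^ (toAdd x.right).val : (ZMod (p * q))ˣ) * sy, ?_⟩
    rw [SemidirectProduct.mul_left, hx, hy, h.phiG_r, DihedralGroup.r_mul_r]
    congr 1
    ring
  inv_mem' := by
    rintro x ⟨hx1, sx, hx⟩
    refine ⟨by rw [SemidirectProduct.inv_right, hx1, inv_one],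
      -((h.unit ^ (toAdd x.right⁻¹).val : (ZMod (p * q))ˣ) * sx), ?_⟩
    rw [SemidirectProduct.inv_left, hx, r_inv, h.phiG_r]
    congr 1
    ring

section Statement11Aux

open DihedralGroup

namespace S11

variable {p q i : ℕ}

theorem p_ne_q (h : Hyp p q i) : p ≠ q := by
  have h1 : 0 < p - 1 := by have := h.hp.two_le; omega
  have := Nat.le_of_dvd h1 h.hdvd
  omega

theorem coprime_pq (h : Hyp p q i) : Nat.Coprime p q :=
  (Nat.coprime_primes h.hp h.hq).mpr (p_ne_q h)

theorem three_le_q (h : Hyp p q i) : 3 ≤ q := by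
  have h1 := h.hq.two_le
  have h2 := Nat.odd_iff.mp h.hoddq
  omega

theorem three_le_p (h : Hyp p q i) : 3 ≤ p := by
  have h1 := h.hp.two_le
  have h2 := Nat.odd_iff.mp h.hoddp
  omega

/-- Reduction mod `p`. -/
noncomputable abbrev ψp (p q : ℕ) : ZMod (p * q) →+* ZMod p :=
  ZMod.castHom (dvd_mul_right p q) (ZMod p)

/-- Reduction mod `q`. -/
noncomputable abbrev ψq (p q : ℕ) : ZMod (p * q) →+* ZMod q :=
  ZMod.castHom (dvd_mul_left q p) (ZMod q)

theorem crt_zero (h : Hyp p q i) {x : ZMod (p * q)} (h1 : ψp p q x = 0) (h2 : ψq p q x = 0) :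
    x = 0 := by
  haveI : NeZero p := ⟨h.hp.ne_zero⟩
  haveI : NeZero q := ⟨h.hq.ne_zero⟩
  haveI : NeZero (p * q) := ⟨Nat.mul_ne_zero h.hp.ne_zero h.hq.ne_zero⟩
  have e1 : ((x.val : ℕ) : ZMod p) = ψp p q x := by rw [ZMod.natCast_val, ZMod.castHom_apply]
  have e2 : ((x.val : ℕ) : ZMod q) = ψq p q x := by rw [ZMod.natCast_val, ZMod.castHom_apply]
  have hp' : p ∣ x.val := (ZMod.natCast_eq_zero_iff _ _).mp (by rw [e1, h1])
  have hq' : q ∣ x.val := (ZMod.natCast_eq_zero_iff _ _).mp (by rw [e2, h2])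
  have hd : p * q ∣ x.val := Nat.Coprime.mul_dvd_of_dvd_of_dvd (coprime_pq h) hp' hq'
  have hx : ((x.val : ℕ) : ZMod (p * q)) = 0 := (ZMod.natCast_eq_zero_iff _ _).mpr hd
  rwa [ZMod.natCast_val, ZMod.cast_id] at hx

theorem crt_unit (h : Hyp p q i) {x : ZMod (p * q)} (h1 : ψp p q x ≠ 0) (h2 : ψq p q x ≠ 0) :
    IsUnit x := by
  haveI : NeZero p := ⟨h.hp.ne_zero⟩
  haveI : NeZero q := ⟨h.hq.ne_zero⟩
  haveI : NeZero (p * q) := ⟨Nat.mul_ne_zero h.hp.ne_zero h.hq.ne_zero⟩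
  have e1 : ((x.val : ℕ) : ZMod p) = ψp p q x := by rw [ZMod.natCast_val, ZMod.castHom_apply]
  have e2 : ((x.val : ℕ) : ZMod q) = ψq p q x := by rw [ZMod.natCast_val, ZMod.castHom_apply]
  have hp' : ¬ p ∣ x.val := fun hd => h1 (by rw [← e1]; exact (ZMod.natCast_eq_zero_iff _ _).mpr hd)
  have hq' : ¬ q ∣ x.val := fun hd => h2 (by rw [← e2]; exact (ZMod.natCast_eq_zero_iff _ _).mpr hd)
  have hc : Nat.Coprime x.val (p * q) :=
    Nat.Coprime.mul_right (Nat.coprime_comm.mp ((Nat.Prime.coprime_iff_not_dvd h.hp).mpr hp'))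
      (Nat.coprime_comm.mp ((Nat.Prime.coprime_iff_not_dvd h.hq).mpr hq'))
  have := (ZMod.isUnit_iff_coprime x.val (p * q)).mpr hc
  rwa [ZMod.natCast_val, ZMod.cast_id] at this

theorem unit_val (h : Hyp p q i) : (h.unit : ZMod (p * q)) = (i : ZMod (p * q)) :=
  ZMod.coe_unitOfCoprime _ _

theorem psip_unit_pow (h : Hyp p q i) (a : ℕ) :
    ψp p q ((h.unit ^ a : (ZMod (p * q))ˣ) : ZMod (p * q)) = (i : ZMod p) ^ a := by
  rw [Units.val_pow_eq_pow_val, unit_val, map_pow, map_natCast]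

theorem i_modq (h : Hyp p q i) : ((i : ℕ) : ZMod q) = 1 := by
  have := (ZMod.natCast_eq_natCast_iff i 1 q).mpr h.hmod
  simpa using this

theorem psiq_unit_pow (h : Hyp p q i) (a : ℕ) :
    ψq p q ((h.unit ^ a : (ZMod (p * q))ˣ) : ZMod (p * q)) = 1 := by
  rw [Units.val_pow_eq_pow_val, unit_val, map_pow, map_natCast, i_modq h, one_pow]

theorem i_p_pow_ne_one (h : Hyp p q i) {a : ℕ} (ha1 : 0 < a) (ha2 : a < q) :
    (i : ZMod p) ^ a ≠ 1 := by
  intro hc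
  have hd := orderOf_dvd_of_pow_eq_one hc
  rw [h.hord] at hd
  have := Nat.le_of_dvd ha1 hd
  omega

theorem i_p_pow_q (h : Hyp p q i) : (i : ZMod p) ^ q = 1 := by
  rw [← h.hord]; exact pow_orderOf_eq_one _

theorem sum_zero (h : Hyp p q i) {a : ℕ} (ha1 : 0 < a) (ha2 : a < q) :
    (∑ t ∈ Finset.range q, ((h.unit ^ a : (ZMod (p * q))ˣ) : ZMod (p * q)) ^ t) = 0 := by
  haveI : Fact (Nat.Prime p) := ⟨h.hp⟩
  apply crt_zero h
  · rw [map_sum]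
    simp_rw [map_pow, psip_unit_pow h]
    set v := (i : ZMod p) ^ a with hv
    have hv1 : v ≠ 1 := i_p_pow_ne_one h ha1 ha2
    have hvq : v ^ q = 1 := by
      rw [hv, ← pow_mul, mul_comm, pow_mul, i_p_pow_q h, one_pow]
    have hgeom := geom_sum_mul v q
    rw [hvq, sub_self] at hgeom
    rcases mul_eq_zero.mp hgeom with h' | h'
    · exact h'
    · exact absurd (sub_eq_zero.mp h') hv1
  · rw [map_sum]
    simp_rw [map_pow, psiq_unit_pow h, one_pow]
    simp [Finset.sum_const, ZMod.natCast_self]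

theorem isUnit_one_add (h : Hyp p q i) (a : ℕ) :
    IsUnit ((1 : ZMod (p * q)) + ((h.unit ^ a : (ZMod (p * q))ˣ) : ZMod (p * q))) := by
  apply crt_unit h
  · rw [map_add, map_one, psip_unit_pow h]
    intro hc
    have hneg : (i : ZMod p) ^ a = -1 := by linear_combination hc
    have h2 : (i : ZMod p) ^ (2 * a) = 1 := by
      rw [two_mul, pow_add, hneg]; ring
    have hdvd : q ∣ 2 * a := by
      have := orderOf_dvd_of_pow_eq_one h2
      rwa [h.hord] at this
    have hq2 : ¬ q ∣ 2 := by
      intro hd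
      have := Nat.le_of_dvd two_pos hd
      have := three_le_q h
      omega
    have hqa : q ∣ a := ((Nat.Prime.dvd_mul h.hq).mp hdvd).resolve_left hq2
    obtain ⟨b, rfl⟩ := hqa
    have h3 : (i : ZMod p) ^ (q * b) = 1 := by rw [pow_mul, i_p_pow_q h, one_pow]
    rw [h3] at hneg
    haveI : Fact (2 < p) := ⟨by have := three_le_p h; omega⟩
    exact ZMod.neg_one_ne_one hneg.symm
  · rw [map_add, map_one, psiq_unit_pow h]
    intro hc
    have h2 : ((2 : ℕ) : ZMod q) = 0 := by push_cast; linear_combination hc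
    have := Nat.le_of_dvd two_pos ((ZMod.natCast_eq_zero_iff 2 q).mp h2)
    have := three_le_q h
    omega

theorem dihedralAut_pow_sr (n : ℕ) (u : (ZMod n)ˣ) (k : ℕ) (m : ZMod n) :
    ((dihedralAut n u) ^ k) (DihedralGroup.sr m)
      = DihedralGroup.sr (((u ^ k : (ZMod n)ˣ) : ZMod n) * m) := by
  induction k generalizing m with
  | zero => simp
  | succ k ih =>
    rw [pow_succ, MulAut.mul_apply]
    have h1 : (dihedralAut n u) (DihedralGroup.sr m) = DihedralGroup.sr ((u : ZMod n) * m) := rfl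
    rw [h1, ih, pow_succ, Units.val_mul, mul_assoc]

theorem phiG_sr (h : Hyp p q i) (z : Multiplicative (ZMod q)) (m : ZMod (p * q)) :
    h.phiG z (DihedralGroup.sr m)
      = DihedralGroup.sr (((h.unit ^ (Multiplicative.toAdd z).val : (ZMod (p * q))ˣ) : ZMod (p * q)) * m) := by
  have h1 : h.phiG z = (dihedralAut (p * q) h.unit) ^ (Multiplicative.toAdd z).val := rfl
  rw [h1, dihedralAut_pow_sr]

theorem phiG_pow_r (h : Hyp p q i) (m : Multiplicative (ZMod q)) (k : ℕ) (j : ZMod (p * q)) :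
    h.phiG (m ^ k) (DihedralGroup.r j)
      = DihedralGroup.r ((((h.unit ^ (Multiplicative.toAdd m).val : (ZMod (p * q))ˣ) : ZMod (p * q))) ^ k * j) := by
  have h1 : h.phiG (m ^ k) = ((dihedralAut (p * q) h.unit) ^ (Multiplicative.toAdd m).val) ^ k := by
    rw [map_pow]; rfl
  rw [h1, ← pow_mul, dihedralAut_pow_r, pow_mul, Units.val_pow_eq_pow_val]

theorem mk_mul (h : Hyp p q i) (x₁ x₂ : DihedralGroup (p * q)) (m₁ m₂ : Multiplicative (ZMod q)) :
    (⟨x₁, m₁⟩ : Gpq h) * ⟨x₂, m₂⟩ = ⟨x₁ * h.phiG m₁ x₂, m₁ * m₂⟩ := rfl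

theorem mk_inv (h : Hyp p q i) (x : DihedralGroup (p * q)) (m : Multiplicative (ZMod q)) :
    (⟨x, m⟩ : Gpq h)⁻¹ = ⟨h.phiG m⁻¹ x⁻¹, m⁻¹⟩ := rfl

theorem phiG_phiG (h : Hyp p q i) (a b : Multiplicative (ZMod q)) (y : DihedralGroup (p * q)) :
    h.phiG a (h.phiG b y) = h.phiG (a * b) y := by rw [map_mul]; rfl

theorem conj_mk (h : Hyp p q i) (x g : DihedralGroup (p * q)) (m c : Multiplicative (ZMod q)) :
    (⟨g, c⟩ : Gpq h) * ⟨x, m⟩ * (⟨g, c⟩ : Gpq h)⁻¹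
      = ⟨g * h.phiG c x * h.phiG m g⁻¹, m⟩ := by
  rw [mk_inv, mk_mul, mk_mul]
  congr 1
  · rw [mul_assoc, mul_assoc]
    congr 1
    rw [phiG_phiG, mul_inv_cancel_comm]
  · exact mul_inv_cancel_comm c m

theorem pow_mk_r (h : Hyp p q i) (j : ZMod (p * q)) (m : Multiplicative (ZMod q)) (k : ℕ) :
    (⟨DihedralGroup.r j, m⟩ : Gpq h) ^ k
      = ⟨DihedralGroup.r ((∑ t ∈ Finset.range k,
          (((h.unit ^ (Multiplicative.toAdd m).val : (ZMod (p * q))ˣ) : ZMod (p * q))) ^ t) * j), m ^ k⟩ := by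
  induction k with
  | zero =>
    rw [pow_zero, pow_zero]
    ext
    · show (1 : DihedralGroup (p * q)) = _
      simp [-DihedralGroup.r_zero, DihedralGroup.one_def]
    · rfl
  | succ k ih =>
    rw [pow_succ, ih, mk_mul]
    congr 1
    · rw [phiG_pow_r h, DihedralGroup.r_mul_r, Finset.sum_range_succ, add_mul]
    · rw [pow_succ]

end S11

end Statement11Aux

namespace S11

variable {p q i : ℕ}

theorem neg_unit_pow_q_add_one (h : Hyp p q i) : (-h.unit) ^ (q + 1) = h.unit := by
  rw [neg_pow, Even.neg_one_pow h.hoddq.add_one, one_mul, pow_succ, h.unit_pow, one_mul]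

theorem neg_unit_pow_q (h : Hyp p q i) : (-h.unit) ^ q = -1 := by
  rw [neg_pow, Odd.neg_one_pow h.hoddq, h.unit_pow, mul_one]

theorem pow_mem_zp (h : Hyp p q i) (a : ℕ) : h.unit ^ a ∈ Subgroup.zpowers (-h.unit) := by
  have he : h.unit ^ a = (-h.unit) ^ ((q + 1) * a) := by
    rw [pow_mul, neg_unit_pow_q_add_one h]
  rw [he]
  exact Subgroup.pow_mem _ (Subgroup.mem_zpowers (-h.unit)) _

theorem neg_one_mem_zp (h : Hyp p q i) :
    (-1 : (ZMod (p * q))ˣ) ∈ Subgroup.zpowers (-h.unit) := by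
  rw [← neg_unit_pow_q h]
  exact Subgroup.pow_mem _ (Subgroup.mem_zpowers (-h.unit)) _

theorem neg_pow_mem_zp (h : Hyp p q i) (a : ℕ) :
    -(h.unit ^ a) ∈ Subgroup.zpowers (-h.unit) := by
  rw [show -(h.unit ^ a) = (-1) * h.unit ^ a from (neg_one_mul _).symm]
  exact Subgroup.mul_mem _ (neg_one_mem_zp h) (pow_mem_zp h a)

theorem neg_mem_zp (h : Hyp p q i) {w : (ZMod (p * q))ˣ}
    (hw : w ∈ Subgroup.zpowers (-h.unit)) : -w ∈ Subgroup.zpowers (-h.unit) := by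
  rw [show -w = (-1) * w from (neg_one_mul _).symm]
  exact Subgroup.mul_mem _ (neg_one_mem_zp h) hw

theorem zp_elts (h : Hyp p q i) {w : (ZMod (p * q))ˣ}
    (hw : w ∈ Subgroup.zpowers (-h.unit)) :
    ∃ a : ℕ, w = h.unit ^ a ∨ w = -(h.unit ^ a) := by
  haveI : NeZero (p * q) := ⟨Nat.mul_ne_zero h.hp.ne_zero h.hq.ne_zero⟩
  rw [← mem_powers_iff_mem_zpowers] at hw
  obtain ⟨k, hk⟩ := (Submonoid.mem_powers_iff _ _).mp hw
  refine ⟨k, ?_⟩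
  rcases Nat.even_or_odd k with he | ho
  · left; rw [← hk, neg_pow, Even.neg_one_pow he, one_mul]
  · right; rw [← hk, neg_pow, Odd.neg_one_pow ho, neg_one_mul]

theorem isConj_inv {G : Type*} [Group G] {a b : G} (hc : IsConj a b) : IsConj a⁻¹ b⁻¹ := by
  obtain ⟨c, hc⟩ := isConj_iff.mp hc
  exact isConj_iff.mpr ⟨c, by rw [← hc]; group⟩

theorem mem_realClass_self {G : Type*} [Group G] (g : G) : g ∈ realClass g :=
  Or.inl (IsConj.refl g)

theorem realClass_eq_of_mem {G : Type*} [Group G] {g x : G} (hx : x ∈ realClass g) :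
    realClass x = realClass g := by
  rcases hx with hc | hc
  · ext y
    constructor
    · rintro (h1 | h1)
      · exact Or.inl (hc.trans h1)
      · exact Or.inr ((isConj_inv hc).trans h1)
    · rintro (h1 | h1)
      · exact Or.inl (hc.symm.trans h1)
      · exact Or.inr ((isConj_inv hc).symm.trans h1)
  · have hc' : IsConj g x⁻¹ := by
      have := isConj_inv hc
      rwa [inv_inv] at this
    ext y
    constructor
    · rintro (h1 | h1)
      · exact Or.inr (hc.trans h1)
      · exact Or.inl (hc'.trans h1)
    · rintro (h1 | h1)
      · exact Or.inr (hc'.symm.trans h1)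
      · exact Or.inl (hc.symm.trans h1)

theorem unit_pow_val_natCast (h : Hyp p q i) (a : ℕ) :
    h.unit ^ ((a : ZMod q)).val = h.unit ^ a := by
  haveI : NeZero q := ⟨h.hq.ne_zero⟩
  apply pow_eq_pow_iff_modEq.mpr
  have h2 : orderOf h.unit ∣ q := orderOf_dvd_of_pow_eq_one h.unit_pow
  rw [ZMod.val_natCast]
  exact Nat.ModEq.of_dvd h2 (Nat.mod_modEq a q)

theorem conj_r_mem (h : Hyp p q i) (j : ZMod (p * q)) (c : Gpq h) :
    ∃ w ∈ Subgroup.zpowers (-h.unit),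
      c * (⟨DihedralGroup.r j, 1⟩ : Gpq h) * c⁻¹
        = ⟨DihedralGroup.r ((w : ZMod (p * q)) * j), 1⟩ := by
  obtain ⟨g, cm⟩ := c
  rw [conj_mk, h.phiG_r, map_one, MulAut.one_apply]
  cases g with
  | r k =>
    refine ⟨h.unit ^ (Multiplicative.toAdd cm).val, pow_mem_zp h _, ?_⟩
    rw [r_inv, DihedralGroup.r_mul_r, DihedralGroup.r_mul_r]
    congr 2
    ring
  | sr k =>
    refine ⟨-(h.unit ^ (Multiplicative.toAdd cm).val), neg_pow_mem_zp h _, ?_⟩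
    have hsk : (DihedralGroup.sr k)⁻¹ = DihedralGroup.sr k := rfl
    rw [hsk, DihedralGroup.sr_mul_r, DihedralGroup.sr_mul_sr, Units.val_neg]
    congr 2
    ring

theorem inv_mk_r_one (h : Hyp p q i) (j : ZMod (p * q)) :
    (⟨DihedralGroup.r j, 1⟩ : Gpq h)⁻¹ = ⟨DihedralGroup.r (-j), 1⟩ := by
  rw [mk_inv, inv_one, map_one, MulAut.one_apply, r_inv]

theorem mem_realClass_r_iff (h : Hyp p q i) (j : ZMod (p * q)) (x : Gpq h) :
    x ∈ realClass (⟨DihedralGroup.r j, 1⟩ : Gpq h) ↔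
      ∃ w ∈ Subgroup.zpowers (-h.unit),
        x = ⟨DihedralGroup.r ((w : ZMod (p * q)) * j), 1⟩ := by
  constructor
  · rintro (hc | hc)
    · obtain ⟨c, hc⟩ := isConj_iff.mp hc
      obtain ⟨w, hw, he⟩ := conj_r_mem h j c
      exact ⟨w, hw, by rw [← hc, he]⟩
    · rw [inv_mk_r_one] at hc
      obtain ⟨c, hc⟩ := isConj_iff.mp hc
      obtain ⟨w, hw, he⟩ := conj_r_mem h (-j) c
      refine ⟨-w, neg_mem_zp h hw, ?_⟩
      rw [← hc, he, Units.val_neg]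
      congr 2
      ring
  · rintro ⟨w, hw, rfl⟩
    obtain ⟨a, rfl | rfl⟩ := zp_elts h hw
    · left
      apply isConj_iff.mpr
      refine ⟨⟨1, Multiplicative.ofAdd (a : ZMod q)⟩, ?_⟩
      rw [conj_mk, h.phiG_r, map_one, MulAut.one_apply, inv_one, mul_one, one_mul]
      congr 3
      · exact congrArg Units.val (unit_pow_val_natCast h a)
    · left
      apply isConj_iff.mpr
      refine ⟨⟨DihedralGroup.sr 0, Multiplicative.ofAdd (a : ZMod q)⟩, ?_⟩
      rw [conj_mk, h.phiG_r, map_one, MulAut.one_apply]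
      have hsk : (DihedralGroup.sr (0 : ZMod (p * q)))⁻¹ = DihedralGroup.sr 0 := rfl
      rw [hsk, DihedralGroup.sr_mul_r, DihedralGroup.sr_mul_sr, Units.val_neg]
      simp only [toAdd_ofAdd]
      rw [congrArg Units.val (unit_pow_val_natCast h a)]
      congr 2
      ring

end S11

namespace S11

variable {p q i : ℕ}

theorem conj_sr_mem (h : Hyp p q i) (j₀ : ZMod (p * q)) (m : Multiplicative (ZMod q))
    (c : Gpq h) : ∃ t : ZMod (p * q),
      c * (⟨DihedralGroup.sr j₀, m⟩ : Gpq h) * c⁻¹ = ⟨DihedralGroup.sr t, m⟩ := by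
  obtain ⟨g, cm⟩ := c
  rw [conj_mk, phiG_sr h]
  cases g with
  | r k =>
    refine ⟨((h.unit ^ (Multiplicative.toAdd cm).val : (ZMod (p * q))ˣ) : ZMod (p * q)) * j₀ - k
      + ((h.unit ^ (Multiplicative.toAdd m).val : (ZMod (p * q))ˣ) : ZMod (p * q)) * -k, ?_⟩
    rw [r_inv, h.phiG_r, DihedralGroup.r_mul_sr, DihedralGroup.sr_mul_r]
  | sr k =>
    have hsk : (DihedralGroup.sr k)⁻¹ = DihedralGroup.sr k := rfl
    refine ⟨((h.unit ^ (Multiplicative.toAdd m).val : (ZMod (p * q))ˣ) : ZMod (p * q)) * k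
      - (((h.unit ^ (Multiplicative.toAdd cm).val : (ZMod (p * q))ˣ) : ZMod (p * q)) * j₀ - k), ?_⟩
    rw [hsk, phiG_sr h, DihedralGroup.sr_mul_sr, DihedralGroup.r_mul_sr]

theorem inv_mk_sr_zero (h : Hyp p q i) (m : Multiplicative (ZMod q)) :
    (⟨DihedralGroup.sr 0, m⟩ : Gpq h)⁻¹ = ⟨DihedralGroup.sr 0, m⁻¹⟩ := by
  rw [mk_inv]
  congr 1
  have hs : (DihedralGroup.sr (0 : ZMod (p * q)))⁻¹ = DihedralGroup.sr 0 := rfl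
  rw [hs, phiG_sr h, mul_zero]

theorem isConj_sr (h : Hyp p q i) (m : Multiplicative (ZMod q)) (t : ZMod (p * q)) :
    IsConj (⟨DihedralGroup.sr 0, m⟩ : Gpq h) ⟨DihedralGroup.sr t, m⟩ := by
  have hu := isUnit_one_add h (Multiplicative.toAdd m).val
  set W := ((h.unit ^ (Multiplicative.toAdd m).val : (ZMod (p * q))ˣ) : ZMod (p * q)) with hW
  apply isConj_iff.mpr
  refine ⟨⟨DihedralGroup.r (-((hu.unit⁻¹ : (ZMod (p * q))ˣ) * t)), 1⟩, ?_⟩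
  rw [conj_mk, map_one, MulAut.one_apply, r_inv, h.phiG_r, DihedralGroup.r_mul_sr,
    DihedralGroup.sr_mul_r]
  congr 2
  have hv : ((1 : ZMod (p * q)) + W) * ((hu.unit⁻¹ : (ZMod (p * q))ˣ) : ZMod (p * q)) = 1 := by
    exact hu.mul_val_inv
  linear_combination t * hv

theorem mem_realClass_sr_iff (h : Hyp p q i) (m : Multiplicative (ZMod q)) (x : Gpq h) :
    x ∈ realClass (⟨DihedralGroup.sr 0, m⟩ : Gpq h) ↔
      ∃ t : ZMod (p * q), x = ⟨DihedralGroup.sr t, m⟩ ∨ x = ⟨DihedralGroup.sr t, m⁻¹⟩ := by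
  constructor
  · rintro (hc | hc)
    · obtain ⟨c, hc⟩ := isConj_iff.mp hc
      obtain ⟨t, ht⟩ := conj_sr_mem h 0 m c
      exact ⟨t, Or.inl (by rw [← hc, ht])⟩
    · rw [inv_mk_sr_zero] at hc
      obtain ⟨c, hc⟩ := isConj_iff.mp hc
      obtain ⟨t, ht⟩ := conj_sr_mem h 0 m⁻¹ c
      exact ⟨t, Or.inr (by rw [← hc, ht])⟩
  · rintro ⟨t, rfl | rfl⟩
    · exact Or.inl (isConj_sr h m t)
    · refine Or.inr ?_
      rw [inv_mk_sr_zero]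
      exact isConj_sr h m⁻¹ t

theorem orderOf_mk_r (h : Hyp p q i) (j : ZMod (p * q)) :
    orderOf (⟨DihedralGroup.r j, (1 : Multiplicative (ZMod q))⟩ : Gpq h)
      = (p * q) / Nat.gcd (p * q) j.val := by
  haveI : NeZero (p * q) := ⟨Nat.mul_ne_zero h.hp.ne_zero h.hq.ne_zero⟩
  have h1 : (⟨DihedralGroup.r j, (1 : Multiplicative (ZMod q))⟩ : Gpq h)
      = SemidirectProduct.inl (DihedralGroup.r j) := rfl
  rw [h1, orderOf_injective SemidirectProduct.inl SemidirectProduct.inl_injective,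
    DihedralGroup.orderOf_r]

theorem pow_q_M [NeZero q] (m : Multiplicative (ZMod q)) : m ^ q = 1 := by
  apply Multiplicative.toAdd.injective
  rw [toAdd_pow, toAdd_one, nsmul_eq_mul, ZMod.natCast_self, zero_mul]

theorem mk_r_pow_q (h : Hyp p q i) (j : ZMod (p * q)) (m : Multiplicative (ZMod q))
    (hm : m ≠ 1) : (⟨DihedralGroup.r j, m⟩ : Gpq h) ^ q = 1 := by
  haveI : NeZero q := ⟨h.hq.ne_zero⟩
  rw [pow_mk_r h]
  have hv : (Multiplicative.toAdd m).val ≠ 0 := by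
    intro hc
    apply hm
    apply Multiplicative.toAdd.injective
    rw [toAdd_one]
    exact (ZMod.val_eq_zero _).mp hc
  have hsum := sum_zero h (a := (Multiplicative.toAdd m).val)
    (Nat.pos_of_ne_zero hv) (ZMod.val_lt _)
  rw [hsum, zero_mul, pow_q_M m]
  rfl

theorem sq_mk_sr (h : Hyp p q i) (j : ZMod (p * q)) (m : Multiplicative (ZMod q)) :
    (⟨DihedralGroup.sr j, m⟩ : Gpq h) ^ 2
      = ⟨DihedralGroup.r (((h.unit ^ (Multiplicative.toAdd m).val : (ZMod (p * q))ˣ) : ZMod (p * q)) * j - j),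
          m ^ 2⟩ := by
  rw [pow_two, mk_mul, phiG_sr h, DihedralGroup.sr_mul_sr]
  congr 1
  rw [pow_two]

theorem sq_base_sr (h : Hyp p q i) (m : Multiplicative (ZMod q)) :
    (⟨DihedralGroup.sr 0, m⟩ : Gpq h) ^ 2 = SemidirectProduct.inr (m ^ 2) := by
  rw [sq_mk_sr h, mul_zero, sub_zero]
  rfl

theorem m_sq_ne_one (h : Hyp p q i) {m : Multiplicative (ZMod q)} (hm : m ≠ 1) :
    m ^ 2 ≠ 1 := by
  haveI : Fact (Nat.Prime q) := ⟨h.hq⟩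
  intro hc
  have h2 : ((2 : ℕ) : ZMod q) * Multiplicative.toAdd m = 0 := by
    have := congrArg Multiplicative.toAdd hc
    rw [toAdd_pow, toAdd_one, nsmul_eq_mul] at this
    exact this
  rcases mul_eq_zero.mp h2 with h' | h'
  · have := Nat.le_of_dvd two_pos ((ZMod.natCast_eq_zero_iff 2 q).mp h')
    have := three_le_q h
    omega
  · exact hm (by apply Multiplicative.toAdd.injective; rw [toAdd_one]; exact h')

theorem base_sr_pow_q_ne_one (h : Hyp p q i) (m : Multiplicative (ZMod q)) :
    (⟨DihedralGroup.sr 0, m⟩ : Gpq h) ^ q ≠ 1 := by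
  obtain ⟨k, hk⟩ := h.hoddq
  have hq' : q = 2 * k + 1 := by omega
  have hpow : (⟨DihedralGroup.sr 0, m⟩ : Gpq h) ^ q
      = ⟨DihedralGroup.sr 0, (m ^ 2) ^ k * m⟩ := by
    have e : (⟨DihedralGroup.sr 0, m⟩ : Gpq h) ^ q
        = (⟨DihedralGroup.sr 0, m⟩ : Gpq h) ^ (2 * k + 1) :=
      congrArg (fun n => (⟨DihedralGroup.sr 0, m⟩ : Gpq h) ^ n) hq'
    rw [e, pow_succ, pow_mul, sq_base_sr h, ← map_pow]
    have hinr : SemidirectProduct.inr ((m ^ 2) ^ k)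
        = (⟨(1 : DihedralGroup (p * q)), (m ^ 2) ^ k⟩ : Gpq h) := rfl
    rw [hinr, mk_mul, phiG_sr h, mul_zero, one_mul]
  rw [hpow]
  intro hc
  have := congrArg SemidirectProduct.left hc
  simp only [SemidirectProduct.one_left] at this
  rw [DihedralGroup.one_def] at this
  exact nomatch this

theorem orderOf_base_sr_dvds (h : Hyp p q i) {m : Multiplicative (ZMod q)} (hm : m ≠ 1) :
    2 ∣ orderOf (⟨DihedralGroup.sr 0, m⟩ : Gpq h)
      ∧ q ∣ orderOf (⟨DihedralGroup.sr 0, m⟩ : Gpq h) := by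
  haveI : NeZero q := ⟨h.hq.ne_zero⟩
  set g : Gpq h := ⟨DihedralGroup.sr 0, m⟩ with hg
  have h2q : g ^ (2 * q) = 1 := by
    rw [pow_mul, sq_base_sr h, ← map_pow, pow_q_M, map_one]
  have hdvd : orderOf g ∣ 2 * q := orderOf_dvd_of_pow_eq_one h2q
  have hne2 : g ^ 2 ≠ 1 := by
    rw [sq_base_sr h]
    intro hc
    apply m_sq_ne_one h hm
    have := congrArg SemidirectProduct.right hc
    rwa [SemidirectProduct.right_inr, SemidirectProduct.one_right] at this
  have hneq : g ^ q ≠ 1 := base_sr_pow_q_ne_one h m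
  constructor
  · by_contra hnd
    have hco : Nat.Coprime (orderOf g) 2 :=
      Nat.coprime_comm.mp ((Nat.Prime.coprime_iff_not_dvd Nat.prime_two).mpr hnd)
    have : orderOf g ∣ q := hco.dvd_of_dvd_mul_left hdvd
    exact hneq (orderOf_dvd_iff_pow_eq_one.mp this)
  · by_contra hnd
    have hco : Nat.Coprime (orderOf g) q :=
      Nat.coprime_comm.mp ((Nat.Prime.coprime_iff_not_dvd h.hq).mpr hnd)
    have : orderOf g ∣ 2 := hco.dvd_of_dvd_mul_right hdvd
    exact hne2 (orderOf_dvd_iff_pow_eq_one.mp this)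

theorem sq_mk_sr_one (h : Hyp p q i) (j : ZMod (p * q)) :
    (⟨DihedralGroup.sr j, (1 : Multiplicative (ZMod q))⟩ : Gpq h) ^ 2 = 1 := by
  rw [sq_mk_sr h]
  have : (Multiplicative.toAdd (1 : Multiplicative (ZMod q))).val = 0 := by
    rw [toAdd_one, ZMod.val_zero]
  rw [this, pow_zero, Units.val_one, one_mul, sub_self, one_pow]
  rfl

end S11

namespace S11

variable {p q i : ℕ}

/-- The subtype of qualifying real classes. -/
def QT (h : Hyp p q i) : Type :=
  {S : Set (Gpq h) // ∃ g : Gpq h, S = realClass g ∧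
    ∃ ℓ₁ ℓ₂ : ℕ, Nat.Prime ℓ₁ ∧ Nat.Prime ℓ₂ ∧ ℓ₁ ≠ ℓ₂ ∧ ℓ₁ ∣ orderOf g ∧ ℓ₂ ∣ orderOf g}

def Q1 (h : Hyp p q i) : Type := (ZMod (p * q))ˣ ⧸ Subgroup.zpowers (-h.unit)

def Q2 (q : ℕ) : Type := (ZMod q)ˣ ⧸ Subgroup.zpowers (-1 : (ZMod q)ˣ)

def A (h : Hyp p q i) (j : (ZMod (p * q))ˣ) : Gpq h :=
  ⟨DihedralGroup.r (j : ZMod (p * q)), 1⟩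

def B (h : Hyp p q i) (m : (ZMod q)ˣ) : Gpq h :=
  ⟨DihedralGroup.sr 0, Multiplicative.ofAdd (m : ZMod q)⟩

theorem orderOf_A (h : Hyp p q i) (j : (ZMod (p * q))ˣ) : orderOf (A h j) = p * q := by
  haveI : NeZero (p * q) := ⟨Nat.mul_ne_zero h.hp.ne_zero h.hq.ne_zero⟩
  rw [A, orderOf_mk_r h]
  have hu : IsUnit (((((j : ZMod (p * q))).val : ℕ)) : ZMod (p * q)) := by
    rw [ZMod.natCast_val, ZMod.cast_id]; exact j.isUnit
  have hc : Nat.Coprime ((j : ZMod (p * q)).val) (p * q) :=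
    (ZMod.isUnit_iff_coprime _ _).mp hu
  have hg : Nat.gcd (p * q) ((j : ZMod (p * q)).val) = 1 := by
    rw [Nat.gcd_comm]; exact hc
  rw [hg, Nat.div_one]

theorem qual_A (h : Hyp p q i) (j : (ZMod (p * q))ˣ) :
    ∃ g : Gpq h, realClass (A h j) = realClass g ∧
      ∃ ℓ₁ ℓ₂ : ℕ, Nat.Prime ℓ₁ ∧ Nat.Prime ℓ₂ ∧ ℓ₁ ≠ ℓ₂ ∧ ℓ₁ ∣ orderOf g ∧ ℓ₂ ∣ orderOf g :=
  ⟨A h j, rfl, p, q, h.hp, h.hq, p_ne_q h,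
    by rw [orderOf_A h]; exact dvd_mul_right p q,
    by rw [orderOf_A h]; exact dvd_mul_left q p⟩

theorem ofAdd_unit_ne_one (h : Hyp p q i) (m : (ZMod q)ˣ) :
    Multiplicative.ofAdd ((m : ZMod q)) ≠ (1 : Multiplicative (ZMod q)) := by
  haveI : Fact (Nat.Prime q) := ⟨h.hq⟩
  intro hc
  have h0 : (m : ZMod q) = 0 := by
    have := congrArg Multiplicative.toAdd hc
    simpa using this
  exact m.ne_zero h0

theorem qual_B (h : Hyp p q i) (m : (ZMod q)ˣ) :
    ∃ g : Gpq h, realClass (B h m) = realClass g ∧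
      ∃ ℓ₁ ℓ₂ : ℕ, Nat.Prime ℓ₁ ∧ Nat.Prime ℓ₂ ∧ ℓ₁ ≠ ℓ₂ ∧ ℓ₁ ∣ orderOf g ∧ ℓ₂ ∣ orderOf g :=
  ⟨B h m, rfl, 2, q, Nat.prime_two, h.hq, by have := three_le_q h; omega,
    (orderOf_base_sr_dvds h (ofAdd_unit_ne_one h m)).1,
    (orderOf_base_sr_dvds h (ofAdd_unit_ne_one h m)).2⟩

theorem mem_zp_neg_one {w : (ZMod q)ˣ} (h : Hyp p q i)
    (hw : w ∈ Subgroup.zpowers (-1 : (ZMod q)ˣ)) : w = 1 ∨ w = -1 := by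
  haveI : NeZero q := ⟨h.hq.ne_zero⟩
  rw [← mem_powers_iff_mem_zpowers] at hw
  obtain ⟨k, hk⟩ := (Submonoid.mem_powers_iff _ _).mp hw
  rcases Nat.even_or_odd k with he | ho
  · left; rw [← hk, Even.neg_one_pow he]
  · right; rw [← hk, Odd.neg_one_pow ho]

def F1lift (h : Hyp p q i) : Q1 h → Set (Gpq h) := fun x =>
  Quotient.liftOn' x (fun j => realClass (A h j)) (by
    intro j j' hrel
    have hmem : j⁻¹ * j' ∈ Subgroup.zpowers (-h.unit) := QuotientGroup.leftRel_apply.mp hrel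
    have hj' : (j' : ZMod (p * q)) = ((j⁻¹ * j' : (ZMod (p * q))ˣ) : ZMod (p * q)) * (j : ZMod (p * q)) := by
      rw [← Units.val_mul]
      congr 1
      rw [mul_comm j⁻¹ j', mul_assoc, inv_mul_cancel, mul_one]
    have hA : A h j' ∈ realClass (A h j) :=
      (mem_realClass_r_iff h _ _).mpr ⟨j⁻¹ * j', hmem, by rw [A, hj']⟩
    exact (realClass_eq_of_mem hA).symm)

def F2lift (h : Hyp p q i) : Q2 q → Set (Gpq h) := fun x =>
  Quotient.liftOn' x (fun m => realClass (B h m)) (by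
    intro m m' hrel
    have hmem : m⁻¹ * m' ∈ Subgroup.zpowers (-1 : (ZMod q)ˣ) := QuotientGroup.leftRel_apply.mp hrel
    have hm' : m' = m * (m⁻¹ * m') := by rw [mul_inv_cancel_left]
    rcases mem_zp_neg_one h hmem with hw | hw
    · rw [hw, mul_one] at hm'
      rw [hm']
    · rw [hw, mul_neg, mul_one] at hm'
      have hB : B h m' ∈ realClass (B h m) := by
        apply (mem_realClass_sr_iff h _ _).mpr
        refine ⟨0, Or.inr ?_⟩
        rw [B, hm']
        congr 1
      exact (realClass_eq_of_mem hB).symm)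

def F (h : Hyp p q i) : Q1 h ⊕ Q2 q → QT h
  | Sum.inl x => ⟨F1lift h x, by
      obtain ⟨j, rfl⟩ := QuotientGroup.mk_surjective x
      exact qual_A h j⟩
  | Sum.inr y => ⟨F2lift h y, by
      obtain ⟨m, rfl⟩ := QuotientGroup.mk_surjective y
      exact qual_B h m⟩

theorem F_injective (h : Hyp p q i) : Function.Injective (F h) := by
  haveI : Fact (Nat.Prime q) := ⟨h.hq⟩
  rintro (x | x) (y | y) hab
  · obtain ⟨j, rfl⟩ := QuotientGroup.mk_surjective x
    obtain ⟨j', rfl⟩ := QuotientGroup.mk_surjective y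
    have hv : realClass (A h j) = realClass (A h j') := Subtype.ext_iff.mp hab
    have hm : A h j' ∈ realClass (A h j) := by
      rw [hv]; exact mem_realClass_self _
    obtain ⟨w, hw, he⟩ := (mem_realClass_r_iff h _ _).mp hm
    have h2 : DihedralGroup.r ((j' : ZMod (p * q)))
        = DihedralGroup.r ((w : ZMod (p * q)) * (j : ZMod (p * q))) :=
      congrArg SemidirectProduct.left he
    rw [DihedralGroup.r.injEq] at h2
    have hunits : j' = w * j := Units.ext (by rw [Units.val_mul]; exact h2)
    have hqe : (QuotientGroup.mk j : Q1 h) = QuotientGroup.mk j' := by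
      apply QuotientGroup.eq.mpr
      have : j⁻¹ * j' = w := by rw [hunits, mul_comm w j, ← mul_assoc, inv_mul_cancel, one_mul]
      rw [this]; exact hw
    rw [hqe]
  · exfalso
    obtain ⟨j, rfl⟩ := QuotientGroup.mk_surjective x
    obtain ⟨m, rfl⟩ := QuotientGroup.mk_surjective y
    have hv : realClass (A h j) = realClass (B h m) := Subtype.ext_iff.mp hab
    have hm : A h j ∈ realClass (B h m) := by
      rw [← hv]; exact mem_realClass_self _
    obtain ⟨t, ht | ht⟩ := (mem_realClass_sr_iff h _ _).mp hm <;>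
    · have h2 : DihedralGroup.r ((j : ZMod (p * q))) = DihedralGroup.sr t :=
        congrArg SemidirectProduct.left ht
      exact nomatch h2
  · exfalso
    obtain ⟨m, rfl⟩ := QuotientGroup.mk_surjective x
    obtain ⟨j, rfl⟩ := QuotientGroup.mk_surjective y
    have hv : realClass (B h m) = realClass (A h j) := Subtype.ext_iff.mp hab
    have hm : A h j ∈ realClass (B h m) := by
      rw [hv]; exact mem_realClass_self _
    obtain ⟨t, ht | ht⟩ := (mem_realClass_sr_iff h _ _).mp hm <;>
    · have h2 : DihedralGroup.r ((j : ZMod (p * q))) = DihedralGroup.sr t :=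
        congrArg SemidirectProduct.left ht
      exact nomatch h2
  · obtain ⟨m, rfl⟩ := QuotientGroup.mk_surjective x
    obtain ⟨m', rfl⟩ := QuotientGroup.mk_surjective y
    have hv : realClass (B h m) = realClass (B h m') := Subtype.ext_iff.mp hab
    have hm : B h m' ∈ realClass (B h m) := by
      rw [hv]; exact mem_realClass_self _
    obtain ⟨t, ht | ht⟩ := (mem_realClass_sr_iff h _ _).mp hm
    · have h2 : Multiplicative.ofAdd ((m' : ZMod q)) = Multiplicative.ofAdd ((m : ZMod q)) :=
        congrArg SemidirectProduct.right ht
      have : m' = m := Units.ext (by simpa using congrArg Multiplicative.toAdd h2)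
      rw [this]
    · have h2 : Multiplicative.ofAdd ((m' : ZMod q))
          = (Multiplicative.ofAdd ((m : ZMod q)))⁻¹ :=
        congrArg SemidirectProduct.right ht
      have h3 : (m' : ZMod q) = -(m : ZMod q) := by
        have := congrArg Multiplicative.toAdd h2
        simpa using this
      have hunits : m' = -m := Units.ext (by rw [Units.val_neg]; exact h3)
      have hqe : (QuotientGroup.mk m : Q2 q) = QuotientGroup.mk m' := by
        apply QuotientGroup.eq.mpr
        have : m⁻¹ * m' = -1 := by rw [hunits, mul_neg, inv_mul_cancel]
        rw [this]; exact Subgroup.mem_zpowers _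
      rw [hqe]

theorem F_surjective (h : Hyp p q i) : Function.Surjective (F h) := by
  haveI : Fact (Nat.Prime q) := ⟨h.hq⟩
  rintro ⟨S, g, rfl, l1, l2, hl1, hl2, hne, hd1, hd2⟩
  obtain ⟨gl, gr⟩ := g
  cases gl with
  | r j =>
    by_cases hgr : gr = 1
    · subst hgr
      have hord := orderOf_mk_r h j
      have hdvdn : orderOf (⟨DihedralGroup.r j, (1 : Multiplicative (ZMod q))⟩ : Gpq h) ∣ p * q := by
        rw [hord]; exact Nat.div_dvd_of_dvd (Nat.gcd_dvd_left _ _)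
      have hl1' : l1 = p ∨ l1 = q := by
        rcases (Nat.Prime.dvd_mul hl1).mp (hd1.trans hdvdn) with h' | h'
        · exact Or.inl ((Nat.prime_dvd_prime_iff_eq hl1 h.hp).mp h')
        · exact Or.inr ((Nat.prime_dvd_prime_iff_eq hl1 h.hq).mp h')
      have hl2' : l2 = p ∨ l2 = q := by
        rcases (Nat.Prime.dvd_mul hl2).mp (hd2.trans hdvdn) with h' | h'
        · exact Or.inl ((Nat.prime_dvd_prime_iff_eq hl2 h.hp).mp h')
        · exact Or.inr ((Nat.prime_dvd_prime_iff_eq hl2 h.hq).mp h')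
      have hpq_dvd : p ∣ orderOf (⟨DihedralGroup.r j, (1 : Multiplicative (ZMod q))⟩ : Gpq h)
          ∧ q ∣ orderOf (⟨DihedralGroup.r j, (1 : Multiplicative (ZMod q))⟩ : Gpq h) := by
        rcases hl1' with rfl | rfl <;> rcases hl2' with rfl | rfl
        · exact absurd rfl hne
        · exact ⟨hd1, hd2⟩
        · exact ⟨hd2, hd1⟩
        · exact absurd rfl hne
      have hdvd2 : p * q ∣ orderOf (⟨DihedralGroup.r j, (1 : Multiplicative (ZMod q))⟩ : Gpq h) :=
        Nat.Coprime.mul_dvd_of_dvd_of_dvd (coprime_pq h) hpq_dvd.1 hpq_dvd.2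
      have hord_eq : orderOf (⟨DihedralGroup.r j, (1 : Multiplicative (ZMod q))⟩ : Gpq h) = p * q :=
        Nat.dvd_antisymm hdvdn hdvd2
      have h3 : (p * q) / Nat.gcd (p * q) j.val = p * q := hord.symm.trans hord_eq
      have hgd : Nat.gcd (p * q) j.val = 1 := by
        have h1 : Nat.gcd (p * q) j.val ∣ p * q := Nat.gcd_dvd_left _ _
        have h2 := Nat.mul_div_cancel' h1
        rw [h3] at h2
        have hpos : 0 < p * q := Nat.mul_pos h.hp.pos h.hq.pos
        have := Nat.eq_of_mul_eq_mul_right hpos (h2.trans (one_mul (p * q)).symm)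
        exact this
      have hunit : IsUnit j := by
        have hco : Nat.Coprime j.val (p * q) := by
          rw [Nat.Coprime, Nat.gcd_comm]; exact hgd
        haveI : NeZero (p * q) := ⟨Nat.mul_ne_zero h.hp.ne_zero h.hq.ne_zero⟩
        have := (ZMod.isUnit_iff_coprime j.val (p * q)).mpr hco
        rwa [ZMod.natCast_val, ZMod.cast_id] at this
      refine ⟨Sum.inl (QuotientGroup.mk hunit.unit), ?_⟩
      apply Subtype.ext
      show realClass (A h hunit.unit) = realClass (⟨DihedralGroup.r j, 1⟩ : Gpq h)
      have : A h hunit.unit = (⟨DihedralGroup.r j, 1⟩ : Gpq h) := by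
        rw [A, hunit.unit_spec]
      rw [this]
    · exfalso
      have hdvd := orderOf_dvd_of_pow_eq_one (mk_r_pow_q h j gr hgr)
      have e1 : l1 = q := (Nat.prime_dvd_prime_iff_eq hl1 h.hq).mp (hd1.trans hdvd)
      have e2 : l2 = q := (Nat.prime_dvd_prime_iff_eq hl2 h.hq).mp (hd2.trans hdvd)
      exact hne (e1.trans e2.symm)
  | sr j =>
    by_cases hgr : gr = 1
    · exfalso
      subst hgr
      have hdvd := orderOf_dvd_of_pow_eq_one (sq_mk_sr_one h j)
      haveI : Fact (Nat.Prime 2) := ⟨Nat.prime_two⟩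
      have e1 : l1 = 2 := (Nat.prime_dvd_prime_iff_eq hl1 Nat.prime_two).mp (hd1.trans hdvd)
      have e2 : l2 = 2 := (Nat.prime_dvd_prime_iff_eq hl2 Nat.prime_two).mp (hd2.trans hdvd)
      exact hne (e1.trans e2.symm)
    · have hm0 : Multiplicative.toAdd gr ≠ 0 := fun hc => hgr (by
        apply Multiplicative.toAdd.injective; rw [toAdd_one]; exact hc)
      have hu : IsUnit (Multiplicative.toAdd gr) := isUnit_iff_ne_zero.mpr hm0
      refine ⟨Sum.inr (QuotientGroup.mk hu.unit), ?_⟩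
      apply Subtype.ext
      show realClass (B h hu.unit) = realClass (⟨DihedralGroup.sr j, gr⟩ : Gpq h)
      have hB : B h hu.unit = (⟨DihedralGroup.sr 0, gr⟩ : Gpq h) := by
        rw [B, hu.unit_spec, ofAdd_toAdd]
      rw [hB]
      exact (realClass_eq_of_mem (Or.inl (isConj_sr h gr j))).symm

end S11

namespace S11

variable {p q i : ℕ}

theorem unit_ne_one (h : Hyp p q i) : h.unit ≠ 1 := by
  intro hc
  have hval : ((i : ℕ) : ZMod (p * q)) = 1 := by rw [← unit_val h, hc, Units.val_one]
  have hp2 : ((i : ℕ) : ZMod p) = 1 := by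
    have := congrArg (ψp p q) hval
    rwa [map_natCast, map_one] at this
  have h1 := h.hord
  rw [hp2, orderOf_one] at h1
  have := h.hq.one_lt
  omega

theorem card_Q1 (h : Hyp p q i) : (p - 1) * (q - 1) = Nat.card (Q1 h) * (2 * q) := by
  haveI : NeZero p := ⟨h.hp.ne_zero⟩
  haveI : NeZero q := ⟨h.hq.ne_zero⟩
  haveI : NeZero (p * q) := ⟨Nat.mul_ne_zero h.hp.ne_zero h.hq.ne_zero⟩
  have hcard : Nat.card (ZMod (p * q))ˣ = (p - 1) * (q - 1) := by
    rw [Nat.card_eq_fintype_card, ZMod.card_units_eq_totient, Nat.totient_mul (coprime_pq h),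
      Nat.totient_prime h.hp, Nat.totient_prime h.hq]
  have h2 : orderOf (-1 : (ZMod (p * q))ˣ) = 2 := by
    haveI : Fact (Nat.Prime 2) := ⟨Nat.prime_two⟩
    haveI : Fact (2 < p * q) := ⟨by nlinarith [three_le_p h, three_le_q h]⟩
    apply orderOf_eq_prime
    · rw [neg_one_sq]
    · intro hc
      exact ZMod.neg_one_ne_one (by
        have := congrArg Units.val hc
        simpa using this)
  have hqq : orderOf h.unit = q := by
    haveI : Fact (Nat.Prime q) := ⟨h.hq⟩
    exact orderOf_eq_prime h.unit_pow (unit_ne_one h)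
  have horder : orderOf (-h.unit) = 2 * q := by
    have hco : Nat.Coprime (orderOf (-1 : (ZMod (p * q))ˣ)) (orderOf h.unit) := by
      rw [h2, hqq]
      exact (Nat.coprime_primes Nat.prime_two h.hq).mpr (by have := three_le_q h; omega)
    have he : -h.unit = -1 * h.unit := by rw [neg_one_mul]
    rw [he, (Commute.all (-1 : (ZMod (p * q))ˣ) h.unit).orderOf_mul_eq_mul_orderOf_of_coprime hco,
      h2, hqq]
  calc (p - 1) * (q - 1) = Nat.card (ZMod (p * q))ˣ := hcard.symm
    _ = Nat.card (Q1 h) * Nat.card (Subgroup.zpowers (-h.unit)) :=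
        Subgroup.card_eq_card_quotient_mul_card_subgroup _
    _ = Nat.card (Q1 h) * (2 * q) := by rw [Nat.card_zpowers, horder]

theorem card_Q2 (h : Hyp p q i) : q - 1 = Nat.card (Q2 q) * 2 := by
  haveI : NeZero q := ⟨h.hq.ne_zero⟩
  have hcard : Nat.card (ZMod q)ˣ = q - 1 := by
    rw [Nat.card_eq_fintype_card, ZMod.card_units_eq_totient, Nat.totient_prime h.hq]
  have h2 : orderOf (-1 : (ZMod q)ˣ) = 2 := by
    haveI : Fact (Nat.Prime 2) := ⟨Nat.prime_two⟩
    haveI : Fact (2 < q) := ⟨by have := three_le_q h; omega⟩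
    apply orderOf_eq_prime
    · rw [neg_one_sq]
    · intro hc
      exact ZMod.neg_one_ne_one (by
        have := congrArg Units.val hc
        simpa using this)
  calc q - 1 = Nat.card (ZMod q)ˣ := hcard.symm
    _ = Nat.card (Q2 q) * Nat.card (Subgroup.zpowers (-1 : (ZMod q)ˣ)) :=
        Subgroup.card_eq_card_quotient_mul_card_subgroup _
    _ = Nat.card (Q2 q) * 2 := by rw [Nat.card_zpowers, h2]

theorem card_QT (h : Hyp p q i) : Nat.card (QT h) = Nat.card (Q1 h) + Nat.card (Q2 q) := by
  haveI : NeZero q := ⟨h.hq.ne_zero⟩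
  haveI : NeZero (p * q) := ⟨Nat.mul_ne_zero h.hp.ne_zero h.hq.ne_zero⟩
  haveI : Finite (Q1 h) := by unfold Q1; infer_instance
  haveI : Finite (Q2 q) := by unfold Q2; infer_instance
  have hbij := Nat.card_eq_of_bijective (F h) ⟨F_injective h, F_surjective h⟩
  rw [← hbij, Nat.card_sum]

theorem key (h : Hyp p q i) {r : ℕ} (hr : p - 1 = q * r) :
    2 * (Nat.card (Q1 h) + Nat.card (Q2 q)) = (q - 1) * (r + 1) := by
  have hc1 := card_Q1 h
  have hc2 := card_Q2 h
  have harith1 : r * (q - 1) = 2 * Nat.card (Q1 h) := by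
    have h' : q * (r * (q - 1)) = q * (2 * Nat.card (Q1 h)) := by
      calc q * (r * (q - 1)) = (q * r) * (q - 1) := by ring
        _ = (p - 1) * (q - 1) := by rw [← hr]
        _ = Nat.card (Q1 h) * (2 * q) := hc1
        _ = q * (2 * Nat.card (Q1 h)) := by ring
    exact Nat.eq_of_mul_eq_mul_left h.hq.pos h'
  have hc2' : 2 * Nat.card (Q2 q) = q - 1 := by omega
  calc 2 * (Nat.card (Q1 h) + Nat.card (Q2 q))
      = 2 * Nat.card (Q1 h) + 2 * Nat.card (Q2 q) := by ring
    _ = r * (q - 1) + (q - 1) := by rw [← harith1, hc2']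
    _ = (q - 1) * (r + 1) := by
        rw [Nat.mul_add, Nat.mul_one, Nat.mul_comm (q - 1) r]

end S11

end Mizerka

open Mizerka in
/-- The primary number of `G_{p,q}` (the number of real conjugacy classes of
elements whose order is divisible by at least two distinct primes) equals
`(q-1)(r+1)/2` with `r = (p-1)/q`; in particular it is at least `2`. -/
theorem statement_11 {p q i : ℕ} (h : Hyp p q i) :
    2 * Nat.card {S : Set (Gpq h) // ∃ g : Gpq h, S = realClass g ∧
        ∃ ℓ₁ ℓ₂ : ℕ, Nat.Prime ℓ₁ ∧ Nat.Prime ℓ₂ ∧ ℓ₁ ≠ ℓ₂ ∧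
          ℓ₁ ∣ orderOf g ∧ ℓ₂ ∣ orderOf g} = (q - 1) * ((p - 1) / q + 1) ∧
    2 ≤ Nat.card {S : Set (Gpq h) // ∃ g : Gpq h, S = realClass g ∧
        ∃ ℓ₁ ℓ₂ : ℕ, Nat.Prime ℓ₁ ∧ Nat.Prime ℓ₂ ∧ ℓ₁ ≠ ℓ₂ ∧
          ℓ₁ ∣ orderOf g ∧ ℓ₂ ∣ orderOf g} := by
  have hcount := S11.card_QT h
  obtain ⟨r, hr⟩ := h.hdvd
  have hrq : (p - 1) / q = r := by rw [hr, Nat.mul_div_cancel_left _ h.hq.pos]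
  have hkey := S11.key h hr
  have hq3 := S11.three_le_q h
  have hp3 := S11.three_le_p h
  have hr1 : 1 ≤ r := by
    rcases Nat.eq_zero_or_pos r with rfl | hpos
    · omega
    · exact hpos
  have h4 : 4 ≤ (q - 1) * (r + 1) := by
    calc (4 : ℕ) = 2 * 2 := rfl
      _ ≤ (q - 1) * (r + 1) := Nat.mul_le_mul (by omega) (by omega)
  constructor
  · show 2 * Nat.card (S11.QT h) = (q - 1) * ((p - 1) / q + 1)
    rw [hcount, hrq]
    exact hkey
  · show 2 ≤ Nat.card (S11.QT h)
    rw [hcount]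
    obtain ⟨M, hM⟩ : ∃ M, (q - 1) * (r + 1) = M := ⟨_, rfl⟩
    rw [hM] at hkey h4
    omega
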